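/- arXiv:2405.01425 — 3 statements merged into one kernel-verified Lean document; each statement's English description precedes it below -/
import Mathlib

section
/- Let K ⊆ ℝ^d be a closed convex set with vol(K) > 0, let h > 0, and let y ∈ ℝ^d with s := dist(y, K) > 0. Then the local conductance satisfies ℓ(y) = ∫_K (2πh)^{-d/2} exp(−|y − x|²/(2h)) dx ≤ ∫_s^∞ (2πh)^{-1/2} exp(−z²/(2h)) dz ≤ (1/2)·exp(−s²/(2h)). -/
open MeasureTheory Real Set
open scoped ENNReal NNReal Pointwise Classical

noncomputable section

/-- Euclidean space ℝ^d. -/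
abbrev Euc (d : ℕ) := EuclideanSpace ℝ (Fin d)

/-- Gaussian density `φ_h(z) = (2πh)^{-d/2} exp(-|z|²/(2h))`. -/
def gaussDensity (d : ℕ) (h : ℝ) (z : Euc d) : ℝ :=
  (2 * Real.pi * h) ^ (-(d : ℝ) / 2) * Real.exp (-‖z‖ ^ 2 / (2 * h))

/-- Centered Gaussian measure `γ_h` with density `φ_h`. -/
def gaussMeasure (d : ℕ) (h : ℝ) : Measure (Euc d) :=
  volume.withDensity fun z => ENNReal.ofReal (gaussDensity d h z)

/-- Uniform probability measure on `K` (normalized restricted Lebesgue measure). -/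
def unifMeasure {d : ℕ} (K : Set (Euc d)) : Measure (Euc d) :=
  (volume K)⁻¹ • volume.restrict K

/-- Convolution of two measures. -/
def mconv {E : Type*} [MeasurableSpace E] [Add E] (μ ν : Measure E) : Measure E :=
  Measure.map (fun p : E × E => p.1 + p.2) (μ.prod ν)

/-- Local conductance `ℓ(y) = ∫_K φ_h(y-x) dx`. -/
def localCond {d : ℕ} (K : Set (Euc d)) (h : ℝ) (y : Euc d) : ℝ :=
  ∫ x in K, gaussDensity d h (y - x)

/-- The conditional measure `π^{X|Y=y}` with density `x ↦ φ_h(x-y)·1_K(x)/ℓ(y)`. -/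
def condMeasure {d : ℕ} (K : Set (Euc d)) (h : ℝ) (y : Euc d) : Measure (Euc d) :=
  volume.withDensity fun x =>
    ENNReal.ofReal (K.indicator (fun x' => gaussDensity d h (x' - y) / localCond K h y) x)

/-- The In-and-Out kernel `T_h μ = ∫ π^{X|Y=y} d(μ * γ_h)(y)`. -/
def inoKernel {d : ℕ} (K : Set (Euc d)) (h : ℝ) (μ : Measure (Euc d)) : Measure (Euc d) :=
  (mconv μ (gaussMeasure d h)).bind (condMeasure K h)

/-- `μ` is `M`-warm with respect to `π`. -/
def IsWarm {E : Type*} [MeasurableSpace E] (M : ℝ) (μ ν : Measure E) : Prop :=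
  ∀ A : Set E, MeasurableSet A → μ A ≤ ENNReal.ofReal M * ν A

/-- `χ^q` divergence; `+∞` if `μ` is not absolutely continuous w.r.t. `ν`. -/
def chiDiv {E : Type*} [MeasurableSpace E] (q : ℝ) (μ ν : Measure E) : ℝ≥0∞ :=
  if μ ≪ ν then (∫⁻ x, μ.rnDeriv ν x ^ q ∂ν) - 1 else ∞

/-- KL divergence; `+∞` if not absolutely continuous or not integrable. -/
def klDiv' {E : Type*} [MeasurableSpace E] (μ ν : Measure E) : ℝ≥0∞ :=
  if μ ≪ ν ∧ Integrable (fun x => (μ.rnDeriv ν x).toReal * Real.log (μ.rnDeriv ν x).toReal) ν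
  then ENNReal.ofReal (∫ x, (μ.rnDeriv ν x).toReal * Real.log (μ.rnDeriv ν x).toReal ∂ν)
  else ∞

/-- `q`-Rényi divergence `R_q = (q-1)⁻¹ log(1 + χ^q)`, with `R_1 = KL`. -/
def renyiDiv {E : Type*} [MeasurableSpace E] (q : ℝ) (μ ν : Measure E) : ℝ≥0∞ :=
  if q = 1 then klDiv' μ ν
  else if chiDiv q μ ν = ∞ then ∞
  else ENNReal.ofReal ((q - 1)⁻¹ * Real.log (1 + (chiDiv q μ ν).toReal))

/-- `R_∞(μ‖ν) = log ess sup_ν (dμ/dν)`. -/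
def renyiInfDiv {E : Type*} [MeasurableSpace E] (μ ν : Measure E) : ℝ≥0∞ :=
  if μ ≪ ν ∧ essSup (μ.rnDeriv ν) ν ≠ ∞
  then ENNReal.ofReal (Real.log (essSup (μ.rnDeriv ν) ν).toReal)
  else ∞

/-- `ν` satisfies a Poincaré inequality with constant `C`. -/
def SatisfiesPI {d : ℕ} (C : ℝ) (ν : Measure (Euc d)) : Prop :=
  ∀ f : Euc d → ℝ, ContDiff ℝ (⊤ : ℕ∞) f → HasCompactSupport f →
    ∫ x, (f x - ∫ y, f y ∂ν) ^ 2 ∂ν ≤ C * ∫ x, ‖fderiv ℝ f x‖ ^ 2 ∂ν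

/-- `ν` satisfies a log-Sobolev inequality with constant `C`. -/
def SatisfiesLSI {d : ℕ} (C : ℝ) (ν : Measure (Euc d)) : Prop :=
  ∀ f : Euc d → ℝ, ContDiff ℝ (⊤ : ℕ∞) f → HasCompactSupport f →
    (∫ x, f x ^ 2 * Real.log (f x ^ 2) ∂ν)
      - (∫ x, f x ^ 2 ∂ν) * Real.log (∫ x, f x ^ 2 ∂ν)
      ≤ 2 * C * ∫ x, ‖fderiv ℝ f x‖ ^ 2 ∂ν

/-- Lebesgue density of `μ * γ_t`: `y ↦ ∫ φ_t(y - x) dμ(x)`. -/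
def heatDensity (d : ℕ) (μ : Measure (Euc d)) (t : ℝ) (y : Euc d) : ℝ :=
  ∫ x, gaussDensity d t (y - x) ∂μ


open scoped RealInnerProductSpace

section InoAux

lemma ino_g_integrable (h : ℝ) (hh : 0 < h) :
    Integrable (fun t : ℝ => (2 * Real.pi * h) ^ (-(1:ℝ)/2) * Real.exp (-t^2/(2*h))) := by
  have hb : 0 < (2*h)⁻¹ := by positivity
  have hexp : ∀ t : ℝ, -t^2/(2*h) = -((2*h)⁻¹) * t^2 := by intro t; field_simp
  simp_rw [hexp]
  exact (integrable_exp_neg_mul_sq hb).const_mul _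

lemma ino_g_int_one (h : ℝ) (hh : 0 < h) :
    ∫ t : ℝ, (2 * Real.pi * h) ^ (-(1:ℝ)/2) * Real.exp (-t^2/(2*h)) = 1 := by
  have hb : 0 < (2*h)⁻¹ := by positivity
  have hexp : ∀ t : ℝ, -t ^ 2 / (2*h) = -((2*h)⁻¹ * t^2) := by intro t; field_simp
  simp_rw [hexp, ← neg_mul]
  rw [MeasureTheory.integral_const_mul, integral_gaussian]
  have h2 : Real.pi / (2*h)⁻¹ = 2 * Real.pi * h := by field_simp
  have hp : 0 < 2 * Real.pi * h := by positivity
  rw [h2, Real.sqrt_eq_rpow, ← Real.rpow_add hp]; norm_num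

lemma ino_gauss_prod (d : ℕ) (h : ℝ) (hh : 0 < h) (z : Euc d) :
    gaussDensity d h z
      = ∏ i, (2 * Real.pi * h) ^ (-(1:ℝ)/2) * Real.exp (-(z i)^2/(2*h)) := by
  have hp : 0 < 2 * Real.pi * h := by positivity
  have hnorm : ‖z‖^2 = ∑ i, (z i)^2 := by
    rw [EuclideanSpace.norm_eq, Real.sq_sqrt (by positivity)]
    simp [Real.norm_eq_abs, sq_abs]
  have h1 : Real.exp (-‖z‖^2/(2*h)) = ∏ i, Real.exp (-(z i)^2/(2*h)) := by
    rw [← Real.exp_sum, hnorm]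
    congr 1
    rw [← Finset.sum_div, ← Finset.sum_neg_distrib]
  have h2 : (2 * Real.pi * h) ^ (-(d:ℝ)/2)
      = ∏ _i : Fin d, (2 * Real.pi * h) ^ (-(1:ℝ)/2) := by
    rw [Finset.prod_const, ← Real.rpow_natCast ((2 * Real.pi * h) ^ (-(1:ℝ)/2)) _,
      ← Real.rpow_mul hp.le]
    norm_num
    congr 1
    simp
    ring
  rw [gaussDensity, h1, h2, Finset.prod_mul_distrib]

lemma ino_gauss_integrable (d : ℕ) (h : ℝ) (hh : 0 < h) :
    Integrable (gaussDensity d h) := by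
  have mp := (EuclideanSpace.volume_preserving_symm_measurableEquiv_toLp (Fin d)).symm
  have emb := ((MeasurableEquiv.toLp 2 (Fin d → ℝ)).symm).symm.measurableEmbedding
  rw [← mp.integrable_comp_emb emb]
  have : (gaussDensity d h) ∘ (⇑((MeasurableEquiv.toLp 2 (Fin d → ℝ)).symm).symm)
      = fun x : Fin d → ℝ =>
        ∏ i, (2 * Real.pi * h) ^ (-(1:ℝ)/2) * Real.exp (-(x i)^2/(2*h)) := by
    funext x
    simp only [Function.comp_apply]
    rw [ino_gauss_prod d h hh]
    rfl
  rw [this]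
  exact Integrable.fintype_prod fun _ => ino_g_integrable h hh

lemma ino_halfspace (d : ℕ) [NeZero d] (h : ℝ) (hh : 0 < h) (s : ℝ) :
    ∫ z in {z : Euc d | s ≤ z 0}, gaussDensity d h z
      = ∫ t in Set.Ici s, (2 * Real.pi * h) ^ (-(1:ℝ)/2) * Real.exp (-t^2/(2*h)) := by
  set g : ℝ → ℝ := fun t => (2 * Real.pi * h) ^ (-(1:ℝ)/2) * Real.exp (-t^2/(2*h)) with hg
  have mp := (EuclideanSpace.volume_preserving_symm_measurableEquiv_toLp (Fin d)).symm
  have emb := ((MeasurableEquiv.toLp 2 (Fin d → ℝ)).symm).symm.measurableEmbedding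
  have key := mp.setIntegral_preimage_emb emb (gaussDensity d h) {z : Euc d | s ≤ z 0}
  rw [← key]
  have hpre : (⇑((MeasurableEquiv.toLp 2 (Fin d → ℝ)).symm).symm) ⁻¹'
      {z : Euc d | s ≤ z 0} = {x : Fin d → ℝ | s ≤ x 0} := rfl
  rw [hpre]
  have hmeas : MeasurableSet {x : Fin d → ℝ | s ≤ x 0} := by
    have : {x : Fin d → ℝ | s ≤ x 0} = (fun x : Fin d → ℝ => x 0) ⁻¹' Set.Ici s := rfl
    rw [this]
    exact (measurable_pi_apply 0) measurableSet_Ici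
  set F : Fin d → ℝ → ℝ := fun i => if i = 0 then (Set.Ici s).indicator g else g with hF
  have hprod : ∀ x : Fin d → ℝ,
      ({x : Fin d → ℝ | s ≤ x 0}).indicator
        (fun x : Fin d → ℝ => ∏ i, g (x i)) x = ∏ i, F i (x i) := by
    intro x
    by_cases hx : s ≤ x 0
    · have hx1 : x ∈ {x : Fin d → ℝ | s ≤ x 0} := hx
      have hx2 : x 0 ∈ Set.Ici s := hx
      rw [Set.indicator_of_mem hx1]
      refine Finset.prod_congr rfl fun i _ => ?_
      by_cases hi : i = 0
      · subst hi; simp only [hF, if_pos rfl, Set.indicator_of_mem hx2]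
      · simp [hF, hi]
    · have hx1 : x ∉ {x : Fin d → ℝ | s ≤ x 0} := hx
      have hx2 : x 0 ∉ Set.Ici s := hx
      rw [Set.indicator_of_notMem hx1]
      refine (Finset.prod_eq_zero (Finset.mem_univ 0) ?_).symm
      simp only [hF, if_pos rfl, Set.indicator_of_notMem hx2]
  calc ∫ x in {x : Fin d → ℝ | s ≤ x 0},
        gaussDensity d h (((MeasurableEquiv.toLp 2 (Fin d → ℝ)).symm).symm x)
      = ∫ x in {x : Fin d → ℝ | s ≤ x 0}, ∏ i, g (x i) := by
        refine setIntegral_congr_fun hmeas fun x _ => ?_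
        rw [ino_gauss_prod d h hh]
        rfl
    _ = ∫ x : Fin d → ℝ, ({x : Fin d → ℝ | s ≤ x 0}).indicator
          (fun x : Fin d → ℝ => ∏ i, g (x i)) x := (integral_indicator hmeas).symm
    _ = ∫ x : Fin d → ℝ, ∏ i, F i (x i) := by simp_rw [hprod]
    _ = ∏ i, ∫ t : ℝ, F i t := integral_fintype_prod_eq_prod F
    _ = ∫ t in Set.Ici s, g t := by
        rw [Finset.prod_eq_single 0]
        · simp [hF, integral_indicator measurableSet_Ici]
        · intro i _ hi
          simp only [hF, if_neg hi]
          exact ino_g_int_one h hh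
        · simp

lemma ino_sep (d : ℕ) (K : Set (Euc d)) (hconv : Convex ℝ K)
    (hcl : IsClosed K) (hne : K.Nonempty) (y : Euc d)
    (hs : 0 < Metric.infDist y K) :
    ∃ u : Euc d, ‖u‖ = 1 ∧ ∀ x ∈ K, Metric.infDist y K ≤ ⟪x - y, u⟫ := by
  obtain ⟨p, hp, hdist⟩ := hcl.exists_infDist_eq_dist hne y
  set s := Metric.infDist y K with hsdef
  have hsp : s = dist y p := hdist
  have hppos : 0 < dist y p := hsp ▸ hs
  set u : Euc d := (dist y p)⁻¹ • (p - y) with hu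
  have hnorm : ‖p - y‖ = dist y p := by rw [dist_comm, dist_eq_norm]
  have hnu : ‖u‖ = 1 := by
    rw [hu, norm_smul, norm_inv, Real.norm_eq_abs, abs_of_pos hppos, hnorm,
      inv_mul_cancel₀ hppos.ne']
  refine ⟨u, hnu, fun x hx => ?_⟩
  have hproj : ⟪y - p, x - p⟫ ≤ 0 := by
    have heq : ‖y - p‖ = ⨅ w : K, ‖y - w‖ := by
      rw [← dist_eq_norm, ← hsp, hsdef, Metric.infDist_eq_iInf]
      exact iInf_congr fun w => dist_eq_norm y w
    exact (norm_eq_iInf_iff_real_inner_le_zero hconv hp).mp heq x hx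
  have hinner : ⟪x - y, p - y⟫ ≥ (dist y p)^2 := by
    have h1 : x - y = (x - p) + (p - y) := by abel
    rw [h1, inner_add_left]
    have h2 : ⟪x - p, p - y⟫ = -⟪y - p, x - p⟫ := by
      rw [real_inner_comm, show p - y = -(y - p) by abel, inner_neg_left]
    have h3 : ⟪p - y, p - y⟫ = (dist y p)^2 := by
      rw [real_inner_self_eq_norm_sq, hnorm]
    nlinarith
  have hsmul : ⟪x - y, u⟫ = (dist y p)⁻¹ * ⟪x - y, p - y⟫ := real_inner_smul_right _ _ _
  rw [hsp, hsmul]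
  have h4 : dist y p = (dist y p)⁻¹ * (dist y p)^2 := by field_simp
  nth_rewrite 1 [h4]
  exact mul_le_mul_of_nonneg_left hinner (inv_pos.2 hppos).le

lemma ino_tail (h s : ℝ) (hh : 0 < h) (hs : 0 < s) :
    (∫ z in Set.Ioi s, (2 * Real.pi * h) ^ (-(1:ℝ)/2) * Real.exp (-z^2/(2*h)))
      ≤ (1/2) * Real.exp (-s^2/(2*h)) := by
  have hp : 0 < 2 * Real.pi * h := by positivity
  have hb : 0 < (2*h)⁻¹ := by positivity
  set c : ℝ := (2 * Real.pi * h) ^ (-(1:ℝ)/2) with hc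
  have hcpos : 0 < c := Real.rpow_pos_of_pos hp _
  have hint : Integrable (fun t : ℝ => Real.exp (-(2*h)⁻¹ * t^2)) := integrable_exp_neg_mul_sq hb
  have hexp : ∀ t : ℝ, -t^2/(2*h) = -((2*h)⁻¹) * t^2 := by intro t; field_simp
  have hpt : ∀ z ∈ Set.Ioi s, c * Real.exp (-z^2/(2*h))
      ≤ (c * Real.exp (-s^2/(2*h))) * Real.exp (-(z-s)^2/(2*h)) := by
    intro z hz
    rw [mul_assoc, ← Real.exp_add]
    refine mul_le_mul_of_nonneg_left ?_ hcpos.le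
    apply Real.exp_le_exp.2
    rw [← add_div, div_le_div_iff_of_pos_right (by positivity)]
    have hz' : s ≤ z := le_of_lt hz
    nlinarith
  have hI1 : IntegrableOn (fun z => c * Real.exp (-z^2/(2*h))) (Set.Ioi s) := by
    simp_rw [hexp]; exact ((hint.const_mul c)).integrableOn
  have hI2 : IntegrableOn (fun z => (c * Real.exp (-s^2/(2*h))) * Real.exp (-(z-s)^2/(2*h)))
      (Set.Ioi s) := by
    have : Integrable (fun z : ℝ => Real.exp (-(2*h)⁻¹ * (z - s)^2)) := hint.comp_sub_right s
    simp_rw [hexp]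
    exact (this.const_mul _).integrableOn
  have step1 := setIntegral_mono_on hI1 hI2 measurableSet_Ioi hpt
  have step2 : (∫ z in Set.Ioi s, Real.exp (-(z-s)^2/(2*h)))
      = ∫ z in Set.Ioi (0:ℝ), Real.exp (-z^2/(2*h)) := by
    have mp := measurePreserving_add_right (volume : Measure ℝ) s
    have emb := (Homeomorph.addRight s).measurableEmbedding
    have key := mp.setIntegral_preimage_emb emb (fun z => Real.exp (-(z-s)^2/(2*h))) (Set.Ioi s)
    rw [← key]
    have hpre : (fun x : ℝ => x + s) ⁻¹' Set.Ioi s = Set.Ioi 0 := by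
      ext x; simp [Set.mem_Ioi]
    rw [show ⇑(Homeomorph.addRight s) = (fun x : ℝ => x + s) from rfl] at *
    rw [hpre]
    congr 1; ext x; congr 2; ring
  have step3 : (∫ z in Set.Ioi (0:ℝ), Real.exp (-z^2/(2*h)))
      = Real.sqrt (2 * Real.pi * h) / 2 := by
    simp_rw [hexp]
    rw [integral_gaussian_Ioi]
    congr 2
    field_simp
  have hcs : c * Real.sqrt (2 * Real.pi * h) = 1 := by
    rw [hc, Real.sqrt_eq_rpow, ← Real.rpow_add hp]; norm_num
  calc (∫ z in Set.Ioi s, c * Real.exp (-z^2/(2*h)))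
      ≤ ∫ z in Set.Ioi s, (c * Real.exp (-s^2/(2*h))) * Real.exp (-(z-s)^2/(2*h)) := step1
    _ = (c * Real.exp (-s^2/(2*h))) * ∫ z in Set.Ioi s, Real.exp (-(z-s)^2/(2*h)) := by
        rw [MeasureTheory.integral_const_mul]
    _ = (c * Real.exp (-s^2/(2*h))) * (Real.sqrt (2 * Real.pi * h) / 2) := by rw [step2, step3]
    _ = (c * Real.sqrt (2 * Real.pi * h)) * Real.exp (-s^2/(2*h)) * (1/2) := by ring
    _ = (1/2) * Real.exp (-s^2/(2*h)) := by rw [hcs]; ring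

end InoAux

/-- local-conductance bound in terms of the distance to a closed
convex set: `ℓ(y) ≤ ∫_s^∞ (2πh)^{-1/2} e^{-z²/(2h)} dz ≤ (1/2) e^{-s²/(2h)}`. -/
theorem stmt11 (d : ℕ) (hd : 1 ≤ d) (K : Set (Euc d)) (hconv : Convex ℝ K)
    (hcl : IsClosed K) (hK0 : 0 < volume K) (h : ℝ) (hh : 0 < h)
    (y : Euc d) (hs : 0 < Metric.infDist y K) :
    localCond K h y
      ≤ ∫ z in Set.Ioi (Metric.infDist y K),
          (2 * Real.pi * h) ^ (-(1 : ℝ) / 2) * Real.exp (-z ^ 2 / (2 * h)) ∧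
    (∫ z in Set.Ioi (Metric.infDist y K),
        (2 * Real.pi * h) ^ (-(1 : ℝ) / 2) * Real.exp (-z ^ 2 / (2 * h)))
      ≤ (1 / 2) * Real.exp (-(Metric.infDist y K) ^ 2 / (2 * h)) := by
  classical
  haveI : NeZero d := ⟨by omega⟩
  set s := Metric.infDist y K with hsdef
  constructor
  · -- main inequality
    have hne : K.Nonempty := nonempty_of_measure_ne_zero hK0.ne'
    obtain ⟨u, hnu, hKu⟩ := ino_sep d K hconv hcl hne y hs
    have hGint : Integrable (gaussDensity d h) := ino_gauss_integrable d h hh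
    -- orthonormal basis with first vector u
    have hcard : Module.finrank ℝ (Euc d) = Fintype.card (Fin d) := by
      simp [finrank_euclideanSpace_fin]
    have horth : Orthonormal ℝ (({0} : Set (Fin d)).restrict (fun _ => u)) :=
      ⟨fun _ => hnu, fun i j hij => absurd (Subsingleton.elim i j) hij⟩
    obtain ⟨b, hb⟩ := horth.exists_orthonormalBasis_extension_of_card_eq hcard
    have hbu : b 0 = u := hb 0 rfl
    set H : Set (Euc d) := {x | s ≤ ⟪x - y, u⟫} with hH
    have hKH : K ⊆ H := fun x hx => hKu x hx
    have hIc : Integrable (fun x : Euc d => gaussDensity d h (y - x)) := by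
      have mp1 := MeasureTheory.Measure.measurePreserving_sub_left
        (volume : Measure (Euc d)) y
      have emb1 := (Homeomorph.subLeft y : Euc d ≃ₜ Euc d).measurableEmbedding
      exact (mp1.integrable_comp_emb emb1).2 hGint
    have hmeas0 : MeasurableSet {w : Euc d | s ≤ w 0} := by
      have hm : Measurable fun w : Euc d => w 0 :=
        (measurable_pi_apply 0).comp ((MeasurableEquiv.toLp 2 (Fin d → ℝ)).symm).measurable
      exact hm measurableSet_Ici
    have step0 : localCond K h y ≤ ∫ x in H, gaussDensity d h (y - x) := by
      refine setIntegral_mono_set hIc.integrableOn ?_ hKH.eventuallyLE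
      refine Filter.Eventually.of_forall fun x => ?_
      have : 0 ≤ (2 * Real.pi * h) ^ (-(d:ℝ)/2) * Real.exp (-‖y - x‖^2/(2*h)) := by
        positivity
      exact this
    have step1 : (∫ x in H, gaussDensity d h (y - x))
        = ∫ v in {v : Euc d | s ≤ ⟪v, u⟫}, gaussDensity d h v := by
      have mp2 := MeasureTheory.measurePreserving_add_left (volume : Measure (Euc d)) y
      have emb2 := (Homeomorph.addLeft y : Euc d ≃ₜ Euc d).measurableEmbedding
      have key := mp2.setIntegral_preimage_emb emb2
        (fun x => gaussDensity d h (y - x)) H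
      rw [← key]
      have hpre : (fun v : Euc d => y + v) ⁻¹' H = {v : Euc d | s ≤ ⟪v, u⟫} := by
        ext v
        simp [hH, add_sub_cancel_left]
      rw [hpre]
      have hmeasu : MeasurableSet {v : Euc d | s ≤ ⟪v, u⟫} := by
        have : Continuous fun v : Euc d => ⟪v, u⟫ :=
          continuous_id.inner continuous_const
        exact (isClosed_le continuous_const this).measurableSet
      refine setIntegral_congr_fun hmeasu fun v _ => ?_
      have h5 : y - (y + v) = -v := by abel
      rw [h5]
      simp [gaussDensity, norm_neg]
    have step2 : (∫ v in {v : Euc d | s ≤ ⟪v, u⟫}, gaussDensity d h v)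
        = ∫ w in {w : Euc d | s ≤ w 0}, gaussDensity d h w := by
      have mp3 := b.measurePreserving_repr_symm
      have emb3 := b.repr.symm.toHomeomorph.measurableEmbedding
      have key := mp3.setIntegral_preimage_emb emb3
        (gaussDensity d h) {v : Euc d | s ≤ ⟪v, u⟫}
      rw [← key]
      have hpre : (⇑b.repr.symm) ⁻¹' {v : Euc d | s ≤ ⟪v, u⟫}
          = {w : Euc d | s ≤ w 0} := by
        ext w
        simp only [Set.mem_preimage, Set.mem_setOf_eq]
        have hwu : ⟪b.repr.symm w, u⟫ = w 0 := by
          rw [← hbu]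
          have h1 : b 0 = b.repr.symm (EuclideanSpace.single 0 1) := by
            rw [← b.repr_self 0]
            simp
          rw [h1, b.repr.symm.inner_map_map, EuclideanSpace.inner_single_right]
          simp
        rw [hwu]
      rw [hpre]
      refine setIntegral_congr_fun hmeas0 fun w _ => ?_
      simp [gaussDensity, LinearIsometryEquiv.norm_map]
    calc localCond K h y
        ≤ ∫ x in H, gaussDensity d h (y - x) := step0
      _ = ∫ v in {v : Euc d | s ≤ ⟪v, u⟫}, gaussDensity d h v := step1
      _ = ∫ w in {w : Euc d | s ≤ w 0}, gaussDensity d h w := step2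
      _ = ∫ t in Set.Ici s, (2 * Real.pi * h) ^ (-(1:ℝ)/2) * Real.exp (-t^2/(2*h)) :=
          ino_halfspace d h hh s
      _ = ∫ t in Set.Ioi s, (2 * Real.pi * h) ^ (-(1:ℝ)/2) * Real.exp (-t^2/(2*h)) :=
          integral_Ici_eq_integral_Ioi
  · exact ino_tail h s hh hs
end
end

section
/- (Bias from conditioning on success.) Let (Ω, F, P) be a probability space, X : Ω → E a random variable taking values in a measurable space E, and S ∈ F an event with P(S) ≥ 1 − η for some η ∈ (0, 1). Let μ be the law of X and μ^cap the law of X conditioned on S, i.e. μ^cap(A) = P({X ∈ A} ∩ S)/P(S). Then μ^cap ≪ μ with dμ^cap/dμ ≤ 1/(1 − η) μ-almost everywhere, so that R_∞(μ^cap‖μ) ≤ log(1/(1 − η)); consequently, for every q > 1 and every probability measure π on E, R_q(μ^cap‖π) ≤ R_q(μ‖π) + (q/(q − 1))·log(1/(1 − η)). -/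
open MeasureTheory Real Set
open scoped ENNReal NNReal Pointwise Classical

noncomputable section

/-- Auxiliary: if `μ ≤ c • ν` and `ν ≪ ξ`, then `dμ/dξ ≤ c · dν/dξ` a.e. -/
lemma aux_rnDeriv_le_smul {E : Type*} [MeasurableSpace E] (μ ν ξ : Measure E)
    [IsFiniteMeasure ν] [SigmaFinite ξ] (c : ℝ≥0∞) (hνξ : ν ≪ ξ)
    (h : μ ≤ c • ν) :
    μ.rnDeriv ξ ≤ᵐ[ξ] fun x => c * ν.rnDeriv ξ x := by
  refine ae_le_of_forall_setLIntegral_le_of_sigmaFinite (μ.measurable_rnDeriv ξ)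
    fun s hs _ ↦ ?_
  rw [lintegral_const_mul _ (ν.measurable_rnDeriv ξ),
    Measure.setLIntegral_rnDeriv' hνξ hs]
  exact (Measure.setLIntegral_rnDeriv_le s).trans (h s)

/-- bias from conditioning on success. -/
theorem stmt14 {Ω E : Type*} [MeasurableSpace Ω] [MeasurableSpace E]
    (P : Measure Ω) [IsProbabilityMeasure P] (X : Ω → E) (hX : Measurable X)
    (S : Set Ω) (hS : MeasurableSet S) (η : ℝ) (hη : η ∈ Set.Ioo (0 : ℝ) 1)
    (hPS : ENNReal.ofReal (1 - η) ≤ P S)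
    (μ μcap : Measure E)
    (hμ : μ = P.map X) (hμcap : μcap = (P S)⁻¹ • (P.restrict S).map X) :
    μcap ≪ μ ∧
    (∀ᵐ x ∂μ, μcap.rnDeriv μ x ≤ ENNReal.ofReal (1 / (1 - η))) ∧
    renyiInfDiv μcap μ ≤ ENNReal.ofReal (Real.log (1 / (1 - η))) ∧
    (∀ q : ℝ, 1 < q → ∀ π' : Measure E, IsProbabilityMeasure π' →
      renyiDiv q μcap π'
        ≤ renyiDiv q μ π' + ENNReal.ofReal (q / (q - 1) * Real.log (1 / (1 - η)))) := by
  subst hμ hμcap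
  obtain ⟨hη0, hη1'⟩ := hη
  have hη1 : (0 : ℝ) < 1 - η := by linarith
  set cR : ℝ := 1 / (1 - η) with hcR
  have hcRpos : 0 < cR := by positivity
  have hcR1 : 1 ≤ cR := by
    rw [hcR, le_div_iff₀ hη1]; linarith
  set c : ℝ≥0∞ := ENNReal.ofReal cR with hc
  have hc_ne_top : c ≠ ∞ := ENNReal.ofReal_ne_top
  have hc1 : 1 ≤ c := by
    rw [hc, ← ENNReal.ofReal_one]
    exact ENNReal.ofReal_le_ofReal hcR1
  have hPSinv : (P S)⁻¹ ≤ c := by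
    have h1 : (P S)⁻¹ ≤ (ENNReal.ofReal (1 - η))⁻¹ := ENNReal.inv_le_inv' hPS
    rw [← ENNReal.ofReal_inv_of_pos hη1] at h1
    refine h1.trans (le_of_eq ?_)
    rw [hc, hcR, one_div]
  have hμP : IsProbabilityMeasure (P.map X) := Measure.isProbabilityMeasure_map hX.aemeasurable
  -- key inequality between measures
  have hle : (P S)⁻¹ • (P.restrict S).map X ≤ c • P.map X := by
    intro s
    have h1 : ((P.restrict S).map X) s ≤ (P.map X) s :=
      Measure.map_mono Measure.restrict_le_self hX s
    calc ((P S)⁻¹ • (P.restrict S).map X) s = (P S)⁻¹ * ((P.restrict S).map X) s := rfl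
      _ ≤ c * (P.map X) s := mul_le_mul' hPSinv h1
      _ = (c • P.map X) s := rfl
  have hac : (P S)⁻¹ • (P.restrict S).map X ≪ P.map X :=
    Measure.absolutelyContinuous_of_le_smul hle
  have hcapfin : IsFiniteMeasure ((P S)⁻¹ • (P.restrict S).map X) := by
    constructor
    calc ((P S)⁻¹ • (P.restrict S).map X) Set.univ ≤ (c • P.map X) Set.univ := hle _
      _ = c * (P.map X) Set.univ := rfl
      _ < ∞ := by
          rw [measure_univ, mul_one]
          exact hc_ne_top.lt_top
  -- a.e. bound on the density
  have hbound : ∀ᵐ x ∂(P.map X),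
      ((P S)⁻¹ • (P.restrict S).map X).rnDeriv (P.map X) x ≤ c := by
    have h1 := aux_rnDeriv_le_smul ((P S)⁻¹ • (P.restrict S).map X) (P.map X)
      (P.map X) c Measure.AbsolutelyContinuous.rfl hle
    filter_upwards [h1, Measure.rnDeriv_self (P.map X)] with x hx hx2
    calc ((P S)⁻¹ • (P.restrict S).map X).rnDeriv (P.map X) x
        ≤ c * (P.map X).rnDeriv (P.map X) x := hx
      _ = c * 1 := by rw [hx2]
      _ = c := mul_one c
  refine ⟨hac, hbound, ?_, ?_⟩
  · -- renyiInfDiv bound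
    have hess : essSup (((P S)⁻¹ • (P.restrict S).map X).rnDeriv (P.map X)) (P.map X) ≤ c :=
      essSup_le_of_ae_le c hbound
    have hess_ne : essSup (((P S)⁻¹ • (P.restrict S).map X).rnDeriv (P.map X)) (P.map X) ≠ ∞ :=
      (hess.trans_lt hc_ne_top.lt_top).ne
    rw [renyiInfDiv, if_pos ⟨hac, hess_ne⟩]
    refine ENNReal.ofReal_le_ofReal ?_
    set t : ℝ := (essSup (((P S)⁻¹ • (P.restrict S).map X).rnDeriv (P.map X)) (P.map X)).toReal
    have ht : t ≤ cR := by
      have := ENNReal.toReal_mono hc_ne_top hess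
      rwa [hc, ENNReal.toReal_ofReal hcRpos.le] at this
    rcases le_or_gt t 1 with h1 | h1
    · exact (Real.log_nonpos ENNReal.toReal_nonneg h1).trans (Real.log_nonneg hcR1)
    · exact Real.log_le_log (by linarith) ht
  · -- Rényi divergence bound
    intro q hq π' hπ'
    have hq1 : q ≠ 1 := ne_of_gt hq
    have hq0 : (0 : ℝ) ≤ q := by linarith
    have hqm1 : (0 : ℝ) < q - 1 := by linarith
    by_cases hchi : chiDiv q (P.map X) π' = ∞
    · have hRtop : renyiDiv q (P.map X) π' = ⊤ := by
        rw [renyiDiv, if_neg hq1, if_pos hchi]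
      simp [hRtop]
    · -- main case
      have hμπ : P.map X ≪ π' := by
        by_contra h
        rw [chiDiv, if_neg h] at hchi
        exact hchi rfl
      set Iμ : ℝ≥0∞ := ∫⁻ x, (P.map X).rnDeriv π' x ^ q ∂π' with hIμ_def
      have hchi_eq : chiDiv q (P.map X) π' = Iμ - 1 := by rw [chiDiv, if_pos hμπ]
      have hIμ_ne : Iμ ≠ ∞ := by
        intro h
        rw [hchi_eq, h] at hchi
        simp at hchi
      have hcapac : (P S)⁻¹ • (P.restrict S).map X ≪ π' := hac.trans hμπ
      set Icap : ℝ≥0∞ := ∫⁻ x, ((P S)⁻¹ • (P.restrict S).map X).rnDeriv π' x ^ q ∂π'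
        with hIcap_def
      have hchicap_eq : chiDiv q ((P S)⁻¹ • (P.restrict S).map X) π' = Icap - 1 := by
        rw [chiDiv, if_pos hcapac]
      -- pointwise bound w.r.t. π'
      have hpt := aux_rnDeriv_le_smul ((P S)⁻¹ • (P.restrict S).map X) (P.map X) π' c hμπ hle
      have hIcap_le : Icap ≤ c ^ q * Iμ := by
        calc Icap ≤ ∫⁻ x, (c * (P.map X).rnDeriv π' x) ^ q ∂π' := by
              refine lintegral_mono_ae ?_
              filter_upwards [hpt] with x hx
              exact ENNReal.rpow_le_rpow hx hq0
          _ = ∫⁻ x, c ^ q * ((P.map X).rnDeriv π' x) ^ q ∂π' := by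
              congr 1; funext x
              rw [ENNReal.mul_rpow_of_nonneg _ _ hq0]
          _ = c ^ q * Iμ := lintegral_const_mul _
              ((Measure.measurable_rnDeriv _ _).pow_const q)
      have hcq_ne : c ^ q ≠ ∞ := ENNReal.rpow_ne_top_of_nonneg hq0 hc_ne_top
      have hIcap_ne : Icap ≠ ∞ :=
        (hIcap_le.trans_lt (ENNReal.mul_lt_top hcq_ne.lt_top hIμ_ne.lt_top)).ne
      have hchicap_ne : chiDiv q ((P S)⁻¹ • (P.restrict S).map X) π' ≠ ∞ := by
        rw [hchicap_eq]
        exact (tsub_le_self.trans_lt hIcap_ne.lt_top).ne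
      rw [renyiDiv, if_neg hq1, if_neg hchicap_ne, renyiDiv, if_neg hq1, if_neg hchi,
        hchicap_eq, hchi_eq]
      -- key ENNReal inequality
      have hkey : (1 : ℝ≥0∞) + (Icap - 1) ≤ c ^ q * (1 + (Iμ - 1)) := by
        have hCq1 : (1 : ℝ≥0∞) ≤ c ^ q := ENNReal.one_le_rpow hc1 (by linarith)
        have h2 : Icap ≤ c ^ q * (1 + (Iμ - 1)) :=
          hIcap_le.trans (mul_le_mul_right le_add_tsub _)
        have h3 : (1 : ℝ≥0∞) ≤ c ^ q * (1 + (Iμ - 1)) :=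
          le_trans hCq1 (le_mul_of_one_le_right zero_le (le_add_of_nonneg_right zero_le))
        rcases le_total Icap 1 with h | h
        · rw [tsub_eq_zero_of_le h, add_zero]; exact h3
        · rw [add_tsub_cancel_of_le h]; exact h2
      -- pass to real numbers
      set a : ℝ := (Icap - 1).toReal with ha_def
      set b : ℝ := (Iμ - 1).toReal with hb_def
      have ha0 : 0 ≤ a := ENNReal.toReal_nonneg
      have hb0 : 0 ≤ b := ENNReal.toReal_nonneg
      have hIcap1_ne : Icap - 1 ≠ ∞ := (tsub_le_self.trans_lt hIcap_ne.lt_top).ne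
      have hIμ1_ne : Iμ - 1 ≠ ∞ := (tsub_le_self.trans_lt hIμ_ne.lt_top).ne
      have hreal : 1 + a ≤ cR ^ q * (1 + b) := by
        have := ENNReal.toReal_mono
          (by exact ENNReal.mul_ne_top hcq_ne (by simp [hIμ1_ne])) hkey
        rw [ENNReal.toReal_mul, ENNReal.toReal_add ENNReal.one_ne_top hIcap1_ne,
          ENNReal.toReal_add ENNReal.one_ne_top hIμ1_ne, ENNReal.toReal_one] at this
        rwa [hc, ENNReal.ofReal_rpow_of_pos hcRpos,
          ENNReal.toReal_ofReal (Real.rpow_nonneg hcRpos.le q)] at this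
      have hlog : Real.log (1 + a) ≤ q * Real.log cR + Real.log (1 + b) := by
        have h1 : Real.log (1 + a) ≤ Real.log (cR ^ q * (1 + b)) :=
          Real.log_le_log (by linarith) hreal
        rwa [Real.log_mul (by positivity) (by positivity), Real.log_rpow hcRpos] at h1
      rw [← ENNReal.ofReal_add (mul_nonneg (by positivity)
        (Real.log_nonneg (by linarith))) (mul_nonneg (by positivity)
        (Real.log_nonneg hcR1))]
      refine ENNReal.ofReal_le_ofReal ?_
      calc (q - 1)⁻¹ * Real.log (1 + a)
          ≤ (q - 1)⁻¹ * (q * Real.log cR + Real.log (1 + b)) :=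
            mul_le_mul_of_nonneg_left hlog (by positivity)
        _ = (q - 1)⁻¹ * Real.log (1 + b) + q / (q - 1) * Real.log cR := by
            rw [div_eq_mul_inv]; ring
end
end

section
/- Let D > 0, let K ⊆ B_D(0) ⊆ ℝ^d be a Borel set with vol(K) > 0, let h > 0 and x₀ ∈ K, and let μ₁ := T_h δ_{x₀} be the law of one In-and-Out step started from the point mass at x₀. Then μ₁ is absolutely continuous with respect to the uniform measure π^X on K and dμ₁/dπ^X ≤ 2^{d/2}·exp(5D²/h) almost everywhere; i.e., μ₁ is M-warm with respect to π^X with M = 2^{d/2} exp(5D²/h). -/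
open MeasureTheory Real Set
open scoped ENNReal NNReal Pointwise Classical

noncomputable section

section Stmt15Aux

open scoped RealInnerProductSpace

private lemma stmt15_gaussDensity_continuous (d : ℕ) (h : ℝ) :
    Continuous (gaussDensity d h) := by
  unfold gaussDensity; fun_prop

private lemma stmt15_gaussDensity_pos {d : ℕ} {h : ℝ} (hh : 0 < h) (z : Euc d) :
    0 < gaussDensity d h z := by
  unfold gaussDensity
  have h1 : (0:ℝ) < 2 * Real.pi * h := by positivity
  positivity

private lemma stmt15_norm_ineq {d : ℕ} {D : ℝ} (hD : 0 ≤ D) {x x₀ y : Euc d}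
    (hx : ‖x‖ ≤ D) (hx₀ : ‖x₀‖ ≤ D) :
    2*(‖y‖+D)^2 + ‖y - (x + x₀)‖^2 ≤ 2*‖x - y‖^2 + 2*‖y - x₀‖^2 + 18*D^2 := by
  have e1 := norm_sub_sq_real x y
  have e2 := norm_sub_sq_real y x₀
  have e3 : ‖y - (x + x₀)‖^2
      = ‖y‖^2 - 2*(⟪x, y⟫ + ⟪y, x₀⟫) + (‖x‖^2 + 2*⟪x, x₀⟫ + ‖x₀‖^2) := by
    rw [norm_sub_sq_real, norm_add_sq_real, inner_add_right, real_inner_comm y x]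
  have cs1 : ⟪x, y⟫ ≤ ‖x‖ * ‖y‖ := real_inner_le_norm x y
  have cs2 : ⟪y, x₀⟫ ≤ ‖y‖ * ‖x₀‖ := real_inner_le_norm y x₀
  have cs3 : ⟪x, x₀⟫ ≤ ‖x‖ * ‖x₀‖ := real_inner_le_norm x x₀
  have ha : (0:ℝ) ≤ ‖y‖ := norm_nonneg y
  have hb : (0:ℝ) ≤ ‖x‖ := norm_nonneg x
  have hc : (0:ℝ) ≤ ‖x₀‖ := norm_nonneg x₀
  nlinarith [sq_nonneg (‖y‖ - ‖x‖ - ‖x₀‖ - 2*D), sq_nonneg (‖x‖ - ‖x₀‖),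
    mul_nonneg (sub_nonneg.2 hx) (sub_nonneg.2 hx₀), mul_nonneg (sub_nonneg.2 hx) hD,
    mul_nonneg (sub_nonneg.2 hx₀) hD, mul_nonneg hD hD]

private lemma stmt15_localCond_ge {d : ℕ} {h D : ℝ} (hh : 0 < h) {K : Set (Euc d)}
    (hK : MeasurableSet K) (hKD : K ⊆ Metric.closedBall 0 D) (hKfin : volume K ≠ ⊤)
    (y : Euc d) :
    (volume K).toReal * ((2 * Real.pi * h) ^ (-(d:ℝ)/2) * Real.exp (-(‖y‖ + D)^2 / (2*h)))
      ≤ localCond K h y := by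
  have hint : IntegrableOn (fun x => gaussDensity d h (y - x)) K volume := by
    have hbd : ∀ᵐ x ∂(volume.restrict K), ‖gaussDensity d h (y - x)‖
        ≤ (2 * Real.pi * h) ^ (-(d:ℝ)/2) := by
      filter_upwards with x
      rw [Real.norm_of_nonneg (stmt15_gaussDensity_pos hh _).le]
      unfold gaussDensity
      have h1 : (0:ℝ) < (2 * Real.pi * h) ^ (-(d:ℝ)/2) := by positivity
      nth_rewrite 2 [← mul_one ((2 * Real.pi * h) ^ (-(d:ℝ)/2))]
      apply mul_le_mul_of_nonneg_left _ h1.le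
      rw [← Real.exp_zero]
      apply Real.exp_le_exp.2
      have : (0:ℝ) ≤ ‖y - x‖^2 := sq_nonneg _
      have : (0:ℝ) < 2*h := by linarith
      rw [neg_div]
      simp only [neg_nonpos]
      positivity
    exact Measure.integrableOn_of_bounded hKfin
      ((stmt15_gaussDensity_continuous d h).comp
        (continuous_const.sub continuous_id)).aestronglyMeasurable hbd
  have hconst : IntegrableOn (fun _ : Euc d =>
      (2 * Real.pi * h) ^ (-(d:ℝ)/2) * Real.exp (-(‖y‖ + D)^2 / (2*h))) K volume :=
    integrableOn_const hKfin
  calc (volume K).toReal * ((2 * Real.pi * h) ^ (-(d:ℝ)/2) * Real.exp (-(‖y‖ + D)^2 / (2*h)))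
      = ∫ _ in K, (2 * Real.pi * h) ^ (-(d:ℝ)/2) * Real.exp (-(‖y‖ + D)^2 / (2*h)) := by
        rw [setIntegral_const, smul_eq_mul]; rfl
    _ ≤ ∫ x in K, gaussDensity d h (y - x) := by
        apply setIntegral_mono_on hconst hint hK
        intro x hx
        unfold gaussDensity
        have h1 : (0:ℝ) < (2 * Real.pi * h) ^ (-(d:ℝ)/2) := by positivity
        apply mul_le_mul_of_nonneg_left _ h1.le
        apply Real.exp_le_exp.2
        have hxD : ‖x‖ ≤ D := by
          simpa [Metric.mem_closedBall, dist_zero_right] using hKD hx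
        have hn : ‖y - x‖ ≤ ‖y‖ + D := (norm_sub_le y x).trans (by linarith)
        have hsq : ‖y - x‖^2 ≤ (‖y‖ + D)^2 :=
          pow_le_pow_left₀ (norm_nonneg _) hn 2
        rw [neg_div, neg_div, neg_le_neg_iff]
        gcongr
    _ = localCond K h y := rfl

private lemma stmt15_localCond_pos {d : ℕ} {h D : ℝ} (hh : 0 < h) {K : Set (Euc d)}
    (hK : MeasurableSet K) (hKD : K ⊆ Metric.closedBall 0 D) (hK0 : volume K ≠ 0)
    (hKfin : volume K ≠ ⊤) (y : Euc d) : 0 < localCond K h y := by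
  refine lt_of_lt_of_le ?_ (stmt15_localCond_ge hh hK hKD hKfin y)
  have := ENNReal.toReal_pos hK0 hKfin
  positivity

private lemma stmt15_key_ptwise {d : ℕ} {h D : ℝ} (hh : 0 < h) (hD : 0 ≤ D) {K : Set (Euc d)}
    (hK : MeasurableSet K) (hKD : K ⊆ Metric.closedBall 0 D) (hK0 : volume K ≠ 0)
    (hKfin : volume K ≠ ⊤) {x x₀ : Euc d} (hx : x ∈ K) (hx₀ : x₀ ∈ K) (z : Euc d) :
    gaussDensity d h (x - (x₀ + z)) / localCond K h (x₀ + z) * gaussDensity d h z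
      ≤ (volume K).toReal⁻¹ * ((2 * Real.pi * h) ^ (-(d:ℝ)/2)
          * (Real.exp (9*D^2/(2*h)) * Real.exp (-‖z - x‖^2 / (4*h)))) := by
  set y : Euc d := x₀ + z with hy
  have hxD : ‖x‖ ≤ D := by
    simpa [Metric.mem_closedBall, dist_zero_right] using hKD hx
  have hx₀D : ‖x₀‖ ≤ D := by
    simpa [Metric.mem_closedBall, dist_zero_right] using hKD hx₀
  have hLpos := stmt15_localCond_pos hh hK hKD hK0 hKfin (D := D) y
  have hL := stmt15_localCond_ge hh hK hKD hKfin (D := D) y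
  have htK : (0:ℝ) < (volume K).toReal := ENNReal.toReal_pos hK0 hKfin
  set CC : ℝ := (2 * Real.pi * h) ^ (-(d:ℝ)/2) with hCC
  have hCCpos : (0:ℝ) < CC := by rw [hCC]; positivity
  set R : ℝ := (volume K).toReal⁻¹
      * (CC * (Real.exp (9*D^2/(2*h)) * Real.exp (-‖z - x‖^2 / (4*h)))) with hR
  have hRnn : (0:ℝ) ≤ R := by positivity
  rw [div_mul_eq_mul_div, div_le_iff₀ hLpos]
  have step1 : gaussDensity d h (x - y) * gaussDensity d h z
      ≤ R * ((volume K).toReal * (CC * Real.exp (-(‖y‖ + D)^2 / (2*h)))) := by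
    have hz1 : ‖z‖ = ‖y - x₀‖ := by rw [hy]; congr 1; abel
    have hz2 : ‖z - x‖ = ‖y - (x + x₀)‖ := by rw [hy]; congr 1; abel
    have hexp : Real.exp (-‖x - y‖^2/(2*h)) * Real.exp (-‖z‖^2/(2*h))
        ≤ Real.exp (9*D^2/(2*h)) * Real.exp (-‖z - x‖^2/(4*h))
            * Real.exp (-(‖y‖+D)^2/(2*h)) := by
      rw [← Real.exp_add, ← Real.exp_add, ← Real.exp_add]
      apply Real.exp_le_exp.2
      have N := stmt15_norm_ineq hD hxD hx₀D (y := y)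
      rw [hz1, hz2]
      rw [show -‖x - y‖^2/(2*h) + -‖y - x₀‖^2/(2*h)
            = (-2*‖x - y‖^2 + -2*‖y - x₀‖^2)/(4*h) by ring,
          show 9*D^2/(2*h) + -‖y - (x + x₀)‖^2/(4*h) + -(‖y‖+D)^2/(2*h)
            = (18*D^2 - ‖y - (x + x₀)‖^2 - 2*(‖y‖+D)^2)/(4*h) by ring]
      gcongr
      linarith
    calc gaussDensity d h (x - y) * gaussDensity d h z
        = CC * CC * (Real.exp (-‖x - y‖^2/(2*h)) * Real.exp (-‖z‖^2/(2*h))) := by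
          unfold gaussDensity; rw [← hCC]; ring
      _ ≤ CC * CC * (Real.exp (9*D^2/(2*h)) * Real.exp (-‖z - x‖^2/(4*h))
            * Real.exp (-(‖y‖+D)^2/(2*h))) :=
          mul_le_mul_of_nonneg_left hexp (by positivity)
      _ = R * ((volume K).toReal * (CC * Real.exp (-(‖y‖ + D)^2 / (2*h)))) := by
          rw [hR]; field_simp
  exact step1.trans (mul_le_mul_of_nonneg_left hL hRnn)

private lemma stmt15_integrable_gauss {d : ℕ} {b : ℝ} (hb : 0 < b) :
    Integrable (fun z : Euc d => Real.exp (-b * ‖z‖^2)) := by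
  have hci := GaussianFourier.integrable_cexp_neg_mul_sq_norm_add (V := Euc d) (b := (b:ℂ))
    (by simpa using hb) 0 0
  refine hci.norm.congr (Filter.Eventually.of_forall fun z => ?_)
  simp only [Complex.norm_exp]
  congr 1
  simp [← Complex.ofReal_pow]

private lemma stmt15_gauss_lintegral {d : ℕ} {h : ℝ} (hh : 0 < h) (v : Euc d) :
    ∫⁻ z : Euc d, ENNReal.ofReal (Real.exp (-‖z - v‖^2/(4*h)))
      = ENNReal.ofReal ((4*Real.pi*h)^((d:ℝ)/2)) := by
  have hb : (0:ℝ) < 1/(4*h) := by positivity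
  have he : ∀ z : Euc d, -‖z - v‖^2/(4*h) = -(1/(4*h)) * ‖z - v‖^2 := fun z => by ring
  simp_rw [he]
  have hint : Integrable (fun z : Euc d => Real.exp (-(1/(4*h)) * ‖z - v‖^2)) :=
    (stmt15_integrable_gauss (d := d) hb).comp_sub_right v
  rw [← ofReal_integral_eq_lintegral_ofReal hint
    (Filter.Eventually.of_forall fun z => (Real.exp_pos _).le)]
  congr 1
  rw [integral_sub_right_eq_self (fun z : Euc d => Real.exp (-(1/(4*h)) * ‖z‖^2)) v]
  rw [GaussianFourier.integral_rexp_neg_mul_sq_norm hb]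
  rw [show Real.pi / (1/(4*h)) = 4*Real.pi*h by field_simp]
  congr 1
  simp [finrank_euclideanSpace_fin]

private lemma stmt15_localCond_measurable {d : ℕ} (K : Set (Euc d)) (h : ℝ) :
    Measurable (localCond K h) := by
  have hsm : StronglyMeasurable (fun p : Euc d × Euc d => gaussDensity d h (p.1 - p.2)) :=
    ((stmt15_gaussDensity_continuous d h).comp
      (continuous_fst.sub continuous_snd)).stronglyMeasurable
  exact (hsm.integral_prod_right' (ν := volume.restrict K)).measurable

private lemma stmt15_condDens_measurable {d : ℕ} (K : Set (Euc d)) (hK : MeasurableSet K)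
    (h : ℝ) :
    Measurable (fun p : Euc d × Euc d =>
      ENNReal.ofReal (K.indicator
        (fun x' => gaussDensity d h (x' - p.1) / localCond K h p.1) p.2)) := by
  apply Measurable.ennreal_ofReal
  simp_rw [Set.indicator_apply]
  apply Measurable.ite (measurable_snd hK)
  · exact (((stmt15_gaussDensity_continuous d h).comp
      (continuous_snd.sub continuous_fst)).measurable).div
      ((stmt15_localCond_measurable K h).comp measurable_fst)
  · exact measurable_const

private lemma stmt15_condMeasure_measurable {d : ℕ} (K : Set (Euc d)) (hK : MeasurableSet K)
    (h : ℝ) : Measurable (condMeasure K h) := by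
  apply Measure.measurable_of_measurable_coe
  intro s hs
  simp_rw [condMeasure, withDensity_apply _ hs]
  exact Measurable.lintegral_prod_right' (ν := volume.restrict s)
    (stmt15_condDens_measurable K hK h)

private lemma stmt15_const_le {d : ℕ} {h D : ℝ} (hh : 0 < h) (hD : 0 ≤ D) {K : Set (Euc d)}
    (hK0 : volume K ≠ 0) (hKfin : volume K ≠ ⊤) :
    ENNReal.ofReal ((volume K).toReal⁻¹
        * ((2 * Real.pi * h) ^ (-(d:ℝ)/2) * Real.exp (9*D^2/(2*h))))
      * ENNReal.ofReal ((4*Real.pi*h)^((d:ℝ)/2))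
    ≤ ENNReal.ofReal ((2:ℝ)^((d:ℝ)/2) * Real.exp (5*D^2/h)) * (volume K)⁻¹ := by
  have htK : (0:ℝ) < (volume K).toReal := ENNReal.toReal_pos hK0 hKfin
  have h2πh : (0:ℝ) < 2 * Real.pi * h := by positivity
  rw [← ENNReal.ofReal_mul (by positivity)]
  have hrpow : (2*Real.pi*h)^(-(d:ℝ)/2) * (4*Real.pi*h)^((d:ℝ)/2) = (2:ℝ)^((d:ℝ)/2) := by
    rw [show (4*Real.pi*h) = 2*(2*Real.pi*h) by ring,
      Real.mul_rpow (by norm_num) h2πh.le, ← mul_assoc, mul_comm ((2*Real.pi*h)^(-(d:ℝ)/2)),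
      mul_assoc, ← Real.rpow_add h2πh]
    rw [show -(d:ℝ)/2 + (d:ℝ)/2 = 0 by ring, Real.rpow_zero, mul_one]
  have h9 : Real.exp (9*D^2/(2*h)) ≤ Real.exp (5*D^2/h) := by
    apply Real.exp_le_exp.2
    rw [div_le_div_iff₀ (by positivity) hh]
    nlinarith [sq_nonneg D, hh.le]
  have hstep : (volume K).toReal⁻¹
        * ((2 * Real.pi * h) ^ (-(d:ℝ)/2) * Real.exp (9*D^2/(2*h))) * (4*Real.pi*h)^((d:ℝ)/2)
      ≤ (volume K).toReal⁻¹ * ((2:ℝ)^((d:ℝ)/2) * Real.exp (5*D^2/h)) := by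
    calc (volume K).toReal⁻¹
          * ((2 * Real.pi * h) ^ (-(d:ℝ)/2) * Real.exp (9*D^2/(2*h))) * (4*Real.pi*h)^((d:ℝ)/2)
        = (volume K).toReal⁻¹ * (((2 * Real.pi * h) ^ (-(d:ℝ)/2) * (4*Real.pi*h)^((d:ℝ)/2))
            * Real.exp (9*D^2/(2*h))) := by ring
      _ = (volume K).toReal⁻¹ * ((2:ℝ)^((d:ℝ)/2) * Real.exp (9*D^2/(2*h))) := by rw [hrpow]
      _ ≤ (volume K).toReal⁻¹ * ((2:ℝ)^((d:ℝ)/2) * Real.exp (5*D^2/h)) := by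
          have h2p : (0:ℝ) ≤ (2:ℝ)^((d:ℝ)/2) := (Real.rpow_pos_of_pos two_pos _).le
          apply mul_le_mul_of_nonneg_left _ (inv_nonneg.2 htK.le)
          exact mul_le_mul_of_nonneg_left h9 h2p
  refine le_trans (ENNReal.ofReal_le_ofReal hstep) ?_
  rw [ENNReal.ofReal_mul (inv_nonneg.2 htK.le), ENNReal.ofReal_inv_of_pos htK,
    ENNReal.ofReal_toReal hKfin, mul_comm]

end Stmt15Aux

/-- one In-and-Out step from a point mass at `x₀ ∈ K ⊆ B_D(0)` is
`M`-warm with respect to the uniform measure, with `M = 2^{d/2} exp(5D²/h)`. -/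
theorem stmt15 (d : ℕ) (hd : 1 ≤ d) (D : ℝ) (hD : 0 < D) (K : Set (Euc d))
    (hK : MeasurableSet K) (hKD : K ⊆ Metric.closedBall (0 : Euc d) D)
    (hK0 : 0 < volume K) (h : ℝ) (hh : 0 < h) (x₀ : Euc d) (hx₀ : x₀ ∈ K) :
    inoKernel K h (Measure.dirac x₀) ≪ unifMeasure K ∧
    (∀ᵐ x ∂(unifMeasure K),
      (inoKernel K h (Measure.dirac x₀)).rnDeriv (unifMeasure K) x
        ≤ ENNReal.ofReal ((2 : ℝ) ^ ((d : ℝ) / 2) * Real.exp (5 * D ^ 2 / h))) ∧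
    IsWarm ((2 : ℝ) ^ ((d : ℝ) / 2) * Real.exp (5 * D ^ 2 / h))
      (inoKernel K h (Measure.dirac x₀)) (unifMeasure K) := by
  have hD' : (0:ℝ) ≤ D := hD.le
  have hK0' : volume K ≠ 0 := hK0.ne'
  have hKfin : volume K ≠ ⊤ :=
    ((measure_mono hKD).trans_lt measure_closedBall_lt_top).ne
  have htK : (0:ℝ) < (volume K).toReal := ENNReal.toReal_pos hK0' hKfin
  set M : ℝ := (2 : ℝ) ^ ((d : ℝ) / 2) * Real.exp (5 * D ^ 2 / h) with hM
  have hMpos : 0 < M := by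
    rw [hM]
    have := Real.rpow_pos_of_pos (show (0:ℝ) < 2 by norm_num) ((d:ℝ)/2)
    positivity
  set c : ℝ≥0∞ := ENNReal.ofReal M with hc
  have hc0 : c ≠ 0 := by
    rw [hc]
    simp only [ne_eq, ENNReal.ofReal_eq_zero, not_le]
    exact hMpos
  have hctop : c ≠ ⊤ := ENNReal.ofReal_ne_top
  have hcm : Measurable (condMeasure K h) := stmt15_condMeasure_measurable K hK h
  have keyA : ∀ A : Set (Euc d), MeasurableSet A →
      inoKernel K h (Measure.dirac x₀) A ≤ c * unifMeasure K A := by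
    intro A hA
    haveI : SFinite (gaussMeasure d h) := by rw [gaussMeasure]; infer_instance
    have h1 : mconv (Measure.dirac x₀) (gaussMeasure d h)
        = (gaussMeasure d h).map (fun z => x₀ + z) := by
      rw [mconv, Measure.dirac_prod, Measure.map_map measurable_add measurable_prodMk_left]
      rfl
    have hgd : Measurable fun z : Euc d => ENNReal.ofReal (gaussDensity d h z) :=
      (stmt15_gaussDensity_continuous d h).measurable.ennreal_ofReal
    have hcoe : Measurable fun y : Euc d => condMeasure K h y A :=
      (Measure.measurable_coe hA).comp hcm
    have hadd : Measurable fun z : Euc d => x₀ + z := measurable_const.add measurable_id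
    have hcoe2 : Measurable fun z : Euc d => condMeasure K h (x₀ + z) A := hcoe.comp hadd
    have h2 : inoKernel K h (Measure.dirac x₀) A
        = ∫⁻ z, ENNReal.ofReal (gaussDensity d h z) * condMeasure K h (x₀ + z) A ∂volume := by
      rw [inoKernel, h1, Measure.bind_apply hA hcm.aemeasurable, lintegral_map hcoe hadd,
        gaussMeasure, lintegral_withDensity_eq_lintegral_mul _ hgd hcoe2]
      rfl
    have h3 : ∀ z : Euc d, condMeasure K h (x₀ + z) A
        = ∫⁻ x, A.indicator (fun x' => ENNReal.ofReal (K.indicator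
            (fun x'' => gaussDensity d h (x'' - (x₀ + z)) / localCond K h (x₀ + z)) x')) x
          ∂volume := by
      intro z
      rw [condMeasure, withDensity_apply _ hA]
      exact (lintegral_indicator hA _).symm
    have hFmeas : Measurable (fun p : Euc d × Euc d => ENNReal.ofReal (K.indicator
        (fun x' => gaussDensity d h (x' - (x₀ + p.1)) / localCond K h (x₀ + p.1)) p.2)) := by
      apply Measurable.ennreal_ofReal
      simp_rw [Set.indicator_apply]
      apply Measurable.ite (measurable_snd hK)
      · apply Measurable.div
        · exact ((stmt15_gaussDensity_continuous d h).comp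
            (continuous_snd.sub (continuous_const.add continuous_fst))).measurable
        · exact (stmt15_localCond_measurable K h).comp
            (measurable_const.add measurable_fst)
      · exact measurable_const
    have h4 : ∀ z : Euc d, ENNReal.ofReal (gaussDensity d h z)
          * ∫⁻ x, A.indicator (fun x' => ENNReal.ofReal (K.indicator
              (fun x'' => gaussDensity d h (x'' - (x₀ + z)) / localCond K h (x₀ + z)) x')) x
            ∂volume
        = ∫⁻ x, ENNReal.ofReal (gaussDensity d h z) * A.indicator (fun x' => ENNReal.ofReal
            (K.indicator
              (fun x'' => gaussDensity d h (x'' - (x₀ + z)) / localCond K h (x₀ + z)) x')) x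
            ∂volume := by
      intro z
      have hmeasz : Measurable fun x : Euc d => A.indicator (fun x' => ENNReal.ofReal
          (K.indicator
            (fun x'' => gaussDensity d h (x'' - (x₀ + z)) / localCond K h (x₀ + z)) x')) x := by
        apply Measurable.indicator _ hA
        apply Measurable.ennreal_ofReal
        apply Measurable.indicator _ hK
        exact (((stmt15_gaussDensity_continuous d h).comp
          (continuous_id.sub continuous_const)).measurable).div measurable_const
      exact (lintegral_const_mul _ hmeasz).symm
    have hGmeas : Measurable (fun p : Euc d × Euc d =>
        ENNReal.ofReal (gaussDensity d h p.1) * A.indicator (fun x' => ENNReal.ofReal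
          (K.indicator
            (fun x'' => gaussDensity d h (x'' - (x₀ + p.1)) / localCond K h (x₀ + p.1)) x'))
            p.2) := by
      apply Measurable.mul (hgd.comp measurable_fst)
      simp_rw [Set.indicator_apply]
      exact Measurable.ite (measurable_snd hA) hFmeas measurable_const
    have hswap : ∫⁻ z, ∫⁻ x, ENNReal.ofReal (gaussDensity d h z)
          * A.indicator (fun x' => ENNReal.ofReal (K.indicator
            (fun x'' => gaussDensity d h (x'' - (x₀ + z)) / localCond K h (x₀ + z)) x')) x
            ∂volume ∂volume
        = ∫⁻ x, ∫⁻ z, ENNReal.ofReal (gaussDensity d h z)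
          * A.indicator (fun x' => ENNReal.ofReal (K.indicator
            (fun x'' => gaussDensity d h (x'' - (x₀ + z)) / localCond K h (x₀ + z)) x')) x
            ∂volume ∂volume :=
      lintegral_lintegral_swap hGmeas.aemeasurable
    have hbound : ∀ x : Euc d, (∫⁻ z, ENNReal.ofReal (gaussDensity d h z)
          * A.indicator (fun x' => ENNReal.ofReal (K.indicator
            (fun x'' => gaussDensity d h (x'' - (x₀ + z)) / localCond K h (x₀ + z)) x')) x
            ∂volume)
        ≤ (A ∩ K).indicator (fun _ => c * (volume K)⁻¹) x := by
      intro x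
      by_cases hxA : x ∈ A
      · by_cases hxK : x ∈ K
        · have hmem : x ∈ A ∩ K := ⟨hxA, hxK⟩
          rw [Set.indicator_of_mem hmem]
          have hGeq : ∀ z : Euc d, ENNReal.ofReal (gaussDensity d h z)
              * A.indicator (fun x' => ENNReal.ofReal (K.indicator
                (fun x'' => gaussDensity d h (x'' - (x₀ + z)) / localCond K h (x₀ + z)) x')) x
              = ENNReal.ofReal
                  (gaussDensity d h (x - (x₀ + z)) / localCond K h (x₀ + z)
                    * gaussDensity d h z) := by
            intro z
            rw [Set.indicator_of_mem hxA, Set.indicator_of_mem hxK,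
              ← ENNReal.ofReal_mul (stmt15_gaussDensity_pos hh z).le]
            exact congrArg ENNReal.ofReal (mul_comm _ _)
          simp_rw [hGeq]
          have hexpmeas : Measurable fun z : Euc d =>
              ENNReal.ofReal (Real.exp (-‖z - x‖^2/(4*h))) := by
            apply Measurable.ennreal_ofReal
            have : Continuous fun z : Euc d => Real.exp (-‖z - x‖^2/(4*h)) := by fun_prop
            exact this.measurable
          calc ∫⁻ z, ENNReal.ofReal
                (gaussDensity d h (x - (x₀ + z)) / localCond K h (x₀ + z)
                  * gaussDensity d h z) ∂volume
              ≤ ∫⁻ z, ENNReal.ofReal ((volume K).toReal⁻¹ * ((2 * Real.pi * h) ^ (-(d:ℝ)/2)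
                  * (Real.exp (9*D^2/(2*h)) * Real.exp (-‖z - x‖^2/(4*h))))) ∂volume := by
                apply lintegral_mono
                intro z
                exact ENNReal.ofReal_le_ofReal
                  (stmt15_key_ptwise hh hD' hK hKD hK0' hKfin hxK hx₀ z)
            _ = ∫⁻ z, ENNReal.ofReal ((volume K).toReal⁻¹ * ((2 * Real.pi * h) ^ (-(d:ℝ)/2)
                  * Real.exp (9*D^2/(2*h)))) * ENNReal.ofReal (Real.exp (-‖z - x‖^2/(4*h)))
                    ∂volume := by
                congr 1
                funext z
                rw [← ENNReal.ofReal_mul (by positivity)]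
                exact congrArg ENNReal.ofReal (by ring)
            _ = ENNReal.ofReal ((volume K).toReal⁻¹ * ((2 * Real.pi * h) ^ (-(d:ℝ)/2)
                  * Real.exp (9*D^2/(2*h))))
                  * ∫⁻ z, ENNReal.ofReal (Real.exp (-‖z - x‖^2/(4*h))) ∂volume :=
                lintegral_const_mul _ hexpmeas
            _ = ENNReal.ofReal ((volume K).toReal⁻¹ * ((2 * Real.pi * h) ^ (-(d:ℝ)/2)
                  * Real.exp (9*D^2/(2*h))))
                  * ENNReal.ofReal ((4*Real.pi*h)^((d:ℝ)/2)) := by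
                rw [stmt15_gauss_lintegral hh x]
            _ ≤ c * (volume K)⁻¹ := stmt15_const_le hh hD' hK0' hKfin
        · have hzero : ∀ z : Euc d, ENNReal.ofReal (gaussDensity d h z)
              * A.indicator (fun x' => ENNReal.ofReal (K.indicator
                (fun x'' => gaussDensity d h (x'' - (x₀ + z)) / localCond K h (x₀ + z)) x')) x
              = 0 := by
            intro z
            rw [Set.indicator_of_mem hxA, Set.indicator_of_notMem hxK]
            simp
          simp_rw [hzero]
          simp
      · have hzero : ∀ z : Euc d, ENNReal.ofReal (gaussDensity d h z)
            * A.indicator (fun x' => ENNReal.ofReal (K.indicator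
              (fun x'' => gaussDensity d h (x'' - (x₀ + z)) / localCond K h (x₀ + z)) x')) x
            = 0 := by
          intro z
          rw [Set.indicator_of_notMem hxA]
          simp
        simp_rw [hzero]
        simp
    calc inoKernel K h (Measure.dirac x₀) A
        = ∫⁻ x, ∫⁻ z, ENNReal.ofReal (gaussDensity d h z)
          * A.indicator (fun x' => ENNReal.ofReal (K.indicator
            (fun x'' => gaussDensity d h (x'' - (x₀ + z)) / localCond K h (x₀ + z)) x')) x
            ∂volume ∂volume := by
          rw [h2]; simp_rw [h3, h4]; exact hswap
      _ ≤ ∫⁻ x, (A ∩ K).indicator (fun _ => c * (volume K)⁻¹) x ∂volume :=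
          lintegral_mono hbound
      _ = c * (volume K)⁻¹ * volume (A ∩ K) := lintegral_indicator_const (hA.inter hK) _
      _ = c * unifMeasure K A := by
          rw [unifMeasure, Measure.smul_apply, Measure.restrict_apply hA, smul_eq_mul, mul_assoc]
  have hle : inoKernel K h (Measure.dirac x₀) ≤ c • unifMeasure K := by
    refine Measure.le_iff.2 fun s hs => ?_
    rw [Measure.smul_apply, smul_eq_mul]
    exact keyA s hs
  have hac : inoKernel K h (Measure.dirac x₀) ≪ unifMeasure K := by
    refine Measure.AbsolutelyContinuous.mk fun s hs h0 => ?_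
    have hb := keyA s hs
    rw [h0, mul_zero] at hb
    exact le_antisymm hb zero_le
  haveI hfin_unif : IsFiniteMeasure (unifMeasure K) := by
    constructor
    rw [unifMeasure, Measure.smul_apply, smul_eq_mul, Measure.restrict_apply_univ,
      ENNReal.inv_mul_cancel hK0' hKfin]
    exact ENNReal.one_lt_top
  haveI hfin₁ : IsFiniteMeasure (inoKernel K h (Measure.dirac x₀)) := by
    constructor
    calc inoKernel K h (Measure.dirac x₀) Set.univ ≤ c * unifMeasure K Set.univ :=
          keyA Set.univ MeasurableSet.univ
      _ < ⊤ := ENNReal.mul_lt_top hctop.lt_top (measure_lt_top _ _)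
  have hrn : ∀ᵐ x ∂(unifMeasure K),
      (inoKernel K h (Measure.dirac x₀)).rnDeriv (unifMeasure K) x ≤ c := by
    haveI : IsFiniteMeasure (c • unifMeasure K) := by
      constructor
      rw [Measure.smul_apply, smul_eq_mul]
      exact ENNReal.mul_lt_top hctop.lt_top (measure_lt_top _ _)
    have h1 : (inoKernel K h (Measure.dirac x₀)).rnDeriv (c • unifMeasure K)
        ≤ᵐ[c • unifMeasure K] 1 := Measure.rnDeriv_le_one_of_le hle
    rw [Measure.ae_ennreal_smul_measure_eq hc0] at h1
    have h2 := Measure.rnDeriv_smul_right_of_ne_top' (inoKernel K h (Measure.dirac x₀))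
      (unifMeasure K) hc0 hctop
    filter_upwards [h1, h2] with x hx1 hx2
    rw [hx2] at hx1
    simp only [Pi.smul_apply, smul_eq_mul, Pi.one_apply] at hx1
    have hx3 := mul_le_mul_right hx1 c
    rwa [← mul_assoc, ENNReal.mul_inv_cancel hc0 hctop, one_mul, mul_one] at hx3
  exact ⟨hac, hrn, fun A hA => keyA A hA⟩
end
end
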